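/- For ξ = (x,y,t) and η = (u,v,s) in ℍⁿ with z = x+iy, w = u+iv, the derivative at r = 1 of r ↦ |η⁻¹ δ_r(ξ)|⁴ equals 4|z−w|²[x·(x−u) + y·(y−v)] + 4(t − s + 2(y·u − x·v))(t + (y·u − x·v)), where the dots denote Euclidean inner products in ℝⁿ. -/

import Mathlib

open MeasureTheory Filter Set
open scoped BigOperators ENNReal NNReal Real Topology

noncomputable section

/-- The Heisenberg group `ℍⁿ = ℂⁿ × ℝ` (as a set, with Euclidean structure on `ℂⁿ`). -/
abbrev Hgrp (n : ℕ) : Type := EuclideanSpace ℂ (Fin n) × ℝ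

/-- Heisenberg group multiplication `(z,t)(w,s) = (z+w, t+s+2 Im (z ⬝ conj w))`. -/
def hmul {n : ℕ} (ξ η : Hgrp n) : Hgrp n :=
  (ξ.1 + η.1, ξ.2 + η.2 + 2 * (∑ j, ξ.1 j * (starRingEnd ℂ) (η.1 j)).im)

/-- Heisenberg group inverse `(z,t)⁻¹ = (-z,-t)`. -/
def hinv {n : ℕ} (ξ : Hgrp n) : Hgrp n := (-ξ.1, -ξ.2)

/-- Anisotropic dilations `δ_r(z,t) = (rz, r²t)`. -/
def dil {n : ℕ} (r : ℝ) (ξ : Hgrp n) : Hgrp n := (r • ξ.1, r ^ 2 * ξ.2)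

/-- Homogeneous norm `|(z,t)| = (|z|⁴ + t²)^{1/4}`. -/
def hnorm {n : ℕ} (ξ : Hgrp n) : ℝ := (‖ξ.1‖ ^ 4 + ξ.2 ^ 2) ^ ((1 : ℝ) / 4)

/-- Homogeneous dimension `Q = 2n+2` (as a real number). -/
def Qdim (n : ℕ) : ℝ := 2 * n + 2

instance (n : ℕ) : MeasurableSpace (EuclideanSpace ℂ (Fin n)) :=
  MeasurableSpace.comap WithLp.ofLp (inferInstanceAs (MeasurableSpace (∀ _ : Fin n, ℂ)))

instance (n : ℕ) : MeasureSpace (EuclideanSpace ℂ (Fin n)) :=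
  ⟨Measure.map (WithLp.toLp 2) (volume : Measure (∀ _ : Fin n, ℂ))⟩

lemma norm_sq_eq' {n : ℕ} (x : EuclideanSpace ℂ (Fin n)) :
    ‖x‖ ^ 2 = ∑ j, Complex.normSq (x j) := by
  rw [EuclideanSpace.norm_eq, Real.sq_sqrt (by positivity)]
  simp [Complex.sq_norm]


/-- Derivative at `r = 1` of `r ↦ |η⁻¹ δ_r(ξ)|⁴`. -/
theorem stmt5 (n : ℕ) (ξ η : Hgrp n) :
    HasDerivAt (fun r : ℝ => hnorm (hmul (hinv η) (dil r ξ)) ^ 4)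
      (4 * ‖ξ.1 - η.1‖ ^ 2 * (∑ j, ξ.1 j * (starRingEnd ℂ) (ξ.1 j - η.1 j)).re
        + 4 * (ξ.2 - η.2 + 2 * (∑ j, ξ.1 j * (starRingEnd ℂ) (η.1 j)).im)
            * (ξ.2 + (∑ j, ξ.1 j * (starRingEnd ℂ) (η.1 j)).im)) 1 := by
  set A : ℝ := ‖ξ.1‖ ^ 2 with hAdef
  set C : ℝ := ‖η.1‖ ^ 2 with hCdef
  set B : ℝ := (∑ j, ξ.1 j * (starRingEnd ℂ) (η.1 j)).re with hBdef
  set K : ℝ := (∑ j, ξ.1 j * (starRingEnd ℂ) (η.1 j)).im with hKdef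
  have hA : A = ∑ j, Complex.normSq (ξ.1 j) := norm_sq_eq' _
  have hC : C = ∑ j, Complex.normSq (η.1 j) := norm_sq_eq' _
  have hB : B = ∑ j, (ξ.1 j * (starRingEnd ℂ) (η.1 j)).re := by
    rw [hBdef, Complex.re_sum]
  have hK : K = ∑ j, (ξ.1 j * (starRingEnd ℂ) (η.1 j)).im := by
    rw [hKdef, Complex.im_sum]
  have key : ∀ r : ℝ, hnorm (hmul (hinv η) (dil r ξ)) ^ 4
      = (r ^ 2 * A - 2 * r * B + C) ^ 2 + (r ^ 2 * ξ.2 + 2 * r * K - η.2) ^ 2 := by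
    intro r
    rw [hnorm, ← Real.rpow_natCast _ 4, ← Real.rpow_mul (by positivity)]
    norm_num
    have h1 : ‖(hmul (hinv η) (dil r ξ)).1‖ ^ 4
        = (r ^ 2 * A - 2 * r * B + C) ^ 2 := by
      have : ‖(hmul (hinv η) (dil r ξ)).1‖ ^ 4 = (‖(hmul (hinv η) (dil r ξ)).1‖ ^ 2) ^ 2 := by
        ring
      rw [this, norm_sq_eq']
      congr 1
      rw [hA, hB, hC]
      rw [show ∑ j, Complex.normSq ((hmul (hinv η) (dil r ξ)).1 j)
          = ∑ j, (r ^ 2 * Complex.normSq (ξ.1 j)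
              - 2 * r * (ξ.1 j * (starRingEnd ℂ) (η.1 j)).re + Complex.normSq (η.1 j)) from
        Finset.sum_congr rfl (fun j _ => by
          simp only [hmul, hinv, dil, PiLp.add_apply, PiLp.neg_apply, PiLp.smul_apply,
            Complex.real_smul, Complex.normSq_apply, Complex.mul_re, Complex.mul_im,
            Complex.conj_re, Complex.conj_im, Complex.add_re, Complex.add_im,
            Complex.neg_re, Complex.neg_im, Complex.ofReal_re, Complex.ofReal_im]
          ring)]
      rw [Finset.sum_add_distrib, Finset.sum_sub_distrib, ← Finset.mul_sum, ← Finset.mul_sum]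
    have h2 : (hmul (hinv η) (dil r ξ)).2 = r ^ 2 * ξ.2 + 2 * r * K - η.2 := by
      simp only [hmul, hinv, dil]
      have : (∑ j, (-η.1) j * (starRingEnd ℂ) ((r • ξ.1) j)).im
          = r * K := by
        rw [hK, Complex.im_sum, Finset.mul_sum]
        refine Finset.sum_congr rfl (fun j _ => ?_)
        simp only [PiLp.neg_apply, PiLp.smul_apply, Complex.real_smul, Complex.mul_im,
          Complex.mul_re, Complex.conj_re, Complex.conj_im, Complex.neg_re, Complex.neg_im,
          Complex.ofReal_re, Complex.ofReal_im, map_mul, Complex.conj_ofReal]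
        ring
      rw [this]; ring
    rw [h1, h2]
  have hsub : ‖ξ.1 - η.1‖ ^ 2 = A - 2 * B + C := by
    rw [norm_sq_eq', hA, hB, hC]
    rw [show ∑ j, Complex.normSq ((ξ.1 - η.1) j)
        = ∑ j, (Complex.normSq (ξ.1 j)
            - 2 * (ξ.1 j * (starRingEnd ℂ) (η.1 j)).re + Complex.normSq (η.1 j)) from
      Finset.sum_congr rfl (fun j _ => by
        simp only [PiLp.sub_apply, Complex.normSq_apply, Complex.mul_re, Complex.sub_re,
          Complex.sub_im, Complex.conj_re, Complex.conj_im]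
        ring)]
    rw [Finset.sum_add_distrib, Finset.sum_sub_distrib, ← Finset.mul_sum]
  have hre : (∑ j, ξ.1 j * (starRingEnd ℂ) (ξ.1 j - η.1 j)).re = A - B := by
    rw [Complex.re_sum, hA, hB]
    rw [← Finset.sum_sub_distrib]
    refine Finset.sum_congr rfl (fun j _ => ?_)
    simp only [map_sub, mul_sub, Complex.sub_re, Complex.normSq_apply, Complex.mul_re,
      Complex.conj_re, Complex.conj_im]
    ring
  have hg : HasDerivAt
      (fun r : ℝ => (r ^ 2 * A - 2 * r * B + C) ^ 2 + (r ^ 2 * ξ.2 + 2 * r * K - η.2) ^ 2)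
      (2 * (1 ^ 2 * A - 2 * 1 * B + C) * (2 * A - 2 * B)
        + 2 * (1 ^ 2 * ξ.2 + 2 * 1 * K - η.2) * (2 * ξ.2 + 2 * K)) 1 := by
    have p1 : HasDerivAt (fun r : ℝ => r ^ 2 * A - 2 * r * B + C) (2 * A - 2 * B) 1 := by
      have := (((hasDerivAt_pow 2 (1 : ℝ)).mul_const A).sub
        (((hasDerivAt_id (1 : ℝ)).const_mul 2).mul_const B)).add_const C
      simpa using this
    have p2 : HasDerivAt (fun r : ℝ => r ^ 2 * ξ.2 + 2 * r * K - η.2) (2 * ξ.2 + 2 * K) 1 := by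
      have := (((hasDerivAt_pow 2 (1 : ℝ)).mul_const ξ.2).add
        (((hasDerivAt_id (1 : ℝ)).const_mul 2).mul_const K)).sub_const η.2
      simpa using this
    have q1 := p1.pow 2
    have q2 := p2.pow 2
    simpa [Pi.add_def, Pi.pow_def, mul_comm, mul_assoc, mul_left_comm] using q1.add q2
  have hval : 4 * ‖ξ.1 - η.1‖ ^ 2 * (∑ j, ξ.1 j * (starRingEnd ℂ) (ξ.1 j - η.1 j)).re
        + 4 * (ξ.2 - η.2 + 2 * K) * (ξ.2 + K)
      = 2 * (1 ^ 2 * A - 2 * 1 * B + C) * (2 * A - 2 * B)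
        + 2 * (1 ^ 2 * ξ.2 + 2 * 1 * K - η.2) * (2 * ξ.2 + 2 * K) := by
    rw [hsub, hre]; ring
  rw [hval]
  simp only [key]
  exact hg
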